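/- If a circular double change covering design on v = 2k-2 points with blocks of size k has exactly k-1 blocks and covers every pair exactly once (i.e., is tight), then k must be even. -/
import Mathlib

open Finset

private lemma cdccd_prev_next {m : ℕ} (i : ℕ) (hm : 0 < m) (hi : i < m) :
    ((i + m - 1) % m + 1) % m = i := by
  rcases Nat.eq_zero_or_pos i with h0 | h1
  · subst h0
    have h0' : (0:ℕ) + m - 1 = m - 1 := by omega
    rw [h0', Nat.mod_eq_of_lt (by omega : m - 1 < m), Nat.sub_add_cancel (by omega), Nat.mod_self]
  · have h2 : i + m - 1 = (i - 1) + m := by omega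
    rw [h2, Nat.add_mod_right]
    have h3 : (i - 1) % m = i - 1 := Nat.mod_eq_of_lt (by omega)
    have h4 : i - 1 + 1 = i := by omega
    rw [h3, h4, Nat.mod_eq_of_lt hi]

theorem tight_cdccd_2k_sub_2_even (k : ℕ) (hk : 2 ≤ k)
    (B : ℕ → Finset (Fin (2 * k - 2)))
    (hcard : ∀ i < k - 1, (B i).card = k)
    (hchange : ∀ i < k - 1, (B i ∩ B ((i + 1) % (k - 1))).card = k - 2)
    (htight : ∀ T : Finset (Fin (2 * k - 2)), T.card = 2 →
      ∃! i, i < k - 1 ∧ T ⊆ B i ∧ ∃ x ∈ T, x ∉ B ((i + (k - 1) - 1) % (k - 1))) :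
    Even k := by
  rcases Nat.even_or_odd k with he | ho
  · exact he
  exfalso
  obtain ⟨t, ht⟩ := ho
  have hk3 : 3 ≤ k := by omega
  have hm0 : 0 < k - 1 := by omega
  have hv : 0 < 2 * k - 2 := by omega
  set x : Fin (2 * k - 2) := ⟨0, hv⟩ with hxdef
  -- For each y ≠ x, the unique block covering {x, y}
  have hgex : ∀ y : Fin (2 * k - 2), ∃ i, x ≠ y →
      ((i < k - 1 ∧ ({x, y} : Finset _) ⊆ B i ∧
          ∃ z ∈ ({x, y} : Finset _), z ∉ B ((i + (k - 1) - 1) % (k - 1))) ∧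
        ∀ j, (j < k - 1 ∧ ({x, y} : Finset _) ⊆ B j ∧
          ∃ z ∈ ({x, y} : Finset _), z ∉ B ((j + (k - 1) - 1) % (k - 1))) → j = i) := by
    intro y
    by_cases h : x = y
    · exact ⟨0, fun h' => absurd h h'⟩
    · obtain ⟨i, hi, hu⟩ := htight {x, y} (Finset.card_pair h)
      exact ⟨i, fun _ => ⟨hi, fun j hj => hu j hj⟩⟩
  choose g hg using hgex
  -- fiber characterization
  have hmem : ∀ i < k - 1, ∀ y : Fin (2 * k - 2),
      y ∈ (Finset.univ.erase x).filter (fun y => g y = i) ↔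
        (y ≠ x ∧ x ∈ B i ∧ y ∈ B i ∧
          (x ∉ B ((i + (k - 1) - 1) % (k - 1)) ∨ y ∉ B ((i + (k - 1) - 1) % (k - 1)))) := by
    intro i hi y
    simp only [mem_filter, mem_erase, mem_univ, true_and, and_true]
    constructor
    · rintro ⟨hyx, hgy⟩
      have h := (hg y (Ne.symm hyx)).1
      rw [hgy] at h
      obtain ⟨-, hsub, z, hz, hznot⟩ := h
      have hxB : x ∈ B i := hsub (mem_insert_self _ _)
      have hyB : y ∈ B i := hsub (mem_insert_of_mem (mem_singleton_self _))
      refine ⟨hyx, hxB, hyB, ?_⟩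
      rcases mem_insert.mp hz with rfl | hz'
      · exact Or.inl hznot
      · rw [mem_singleton] at hz'; subst hz'; exact Or.inr hznot
    · rintro ⟨hyx, hxB, hyB, hor⟩
      refine ⟨hyx, ?_⟩
      have hsub : ({x, y} : Finset _) ⊆ B i := by
        intro z hz
        rcases mem_insert.mp hz with rfl | hz'
        · exact hxB
        · rw [mem_singleton] at hz'; subst hz'; exact hyB
      have hQ : i < k - 1 ∧ ({x, y} : Finset _) ⊆ B i ∧
          ∃ z ∈ ({x, y} : Finset _), z ∉ B ((i + (k - 1) - 1) % (k - 1)) := by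
        refine ⟨hi, hsub, ?_⟩
        rcases hor with h | h
        · exact ⟨x, mem_insert_self _ _, h⟩
        · exact ⟨y, mem_insert_of_mem (mem_singleton_self _), h⟩
      exact ((hg y (Ne.symm hyx)).2 i hQ).symm
  -- fiberwise count
  have hcount : (Finset.univ.erase x).card =
      ∑ i ∈ Finset.range (k - 1), ((Finset.univ.erase x).filter (fun y => g y = i)).card := by
    apply Finset.card_eq_sum_card_fiberwise
    intro y hy
    have h : x ≠ y := Ne.symm (mem_erase.mp hy).1
    exact mem_range.mpr (hg y h).1.1
  have hLHS : (Finset.univ.erase x).card = 2 * k - 3 := by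
    rw [card_erase_of_mem (mem_univ x), card_univ, Fintype.card_fin]
    omega
  have heven : Even ((Finset.univ.erase x).card) := by
    rw [hcount]
    apply Finset.even_sum
    intro i hi
    rw [mem_range] at hi
    by_cases hxi : x ∈ B i
    · by_cases hxp : x ∈ B ((i + (k - 1) - 1) % (k - 1))
      · -- x persists: fiber = B i \ B (prev i), card 2
        have hfib : (Finset.univ.erase x).filter (fun y => g y = i) =
            B i \ B ((i + (k - 1) - 1) % (k - 1)) := by
          ext y
          rw [hmem i hi y, mem_sdiff]
          constructor
          · rintro ⟨-, -, hyB, hor⟩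
            exact ⟨hyB, hor.resolve_left (not_not_intro hxp)⟩
          · rintro ⟨hyB, hynp⟩
            exact ⟨fun h => hynp (h ▸ hxp), hxi, hyB, Or.inr hynp⟩
        have hp : (i + (k - 1) - 1) % (k - 1) < k - 1 := Nat.mod_lt _ hm0
        have hch := hchange _ hp
        rw [cdccd_prev_next i hm0 hi, inter_comm] at hch
        have hsd := Finset.card_sdiff_add_card_inter (B i) (B ((i + (k - 1) - 1) % (k - 1)))
        rw [hfib]
        have hBi := hcard i hi
        have : (B i \ B ((i + (k - 1) - 1) % (k - 1))).card = 2 := by omega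
        rw [this]
        exact ⟨1, rfl⟩
      · -- x introduced: fiber = (B i).erase x, card k - 1
        have hfib : (Finset.univ.erase x).filter (fun y => g y = i) = (B i).erase x := by
          ext y
          rw [hmem i hi y, mem_erase]
          constructor
          · rintro ⟨hyx, -, hyB, -⟩
            exact ⟨hyx, hyB⟩
          · rintro ⟨hyx, hyB⟩
            exact ⟨hyx, hxi, hyB, Or.inl hxp⟩
        rw [hfib, card_erase_of_mem hxi, hcard i hi]
        exact ⟨t, by omega⟩
      -- x absent: fiber empty
    · have hfib : (Finset.univ.erase x).filter (fun y => g y = i) = ∅ := by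
        apply Finset.eq_empty_of_forall_notMem
        intro y hy
        exact hxi ((hmem i hi y).mp hy).2.1
      rw [hfib]
      simp
  rw [hLHS] at heven
  obtain ⟨c, hc⟩ := heven
  omega
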